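/- Let f be a bounded (n,2n)-affine permutation. Then R(𝒥_f) = 𝒥_{Rf}, i.e. for every i ∈ ℤ/2n one has R((𝒥_f)_{−i}) = (𝒥_{Rf})_i. -/

import Mathlib

/-- A `(k,N)`-affine permutation: a bijection `f : ℤ → ℤ` with `f(i+N) = f(i)+N` and
`∑_{i=1}^{N} (f(i)-i) = kN`. -/
def IsAffinePerm (k N : ℕ) (f : ℤ → ℤ) : Prop :=
  Function.Bijective f ∧ (∀ i : ℤ, f (i + N) = f i + N) ∧
    (∑ i ∈ Finset.Icc (1 : ℤ) (N : ℤ), (f i - i)) = k * N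

/-- Boundedness: `i ≤ f(i) ≤ i + N` for all `i`. -/
def IsBoundedAP (N : ℕ) (f : ℤ → ℤ) : Prop :=
  ∀ i : ℤ, i ≤ f i ∧ f i ≤ i + N

/-- The map `R`, `(Rf)(i) = 2n - f(-i-1) - 1`. -/
def Rperm (n : ℕ) (f : ℤ → ℤ) : ℤ → ℤ := fun i => 2*n - f (-i - 1) - 1

/-- `R(J) = {1,…,2n} \ {2n+1-j : j ∈ J}`. -/
def Rset (n : ℕ) (J : Finset ℕ) : Finset ℕ :=
  Finset.Icc 1 (2*n) \ J.image (fun j => 2*n + 1 - j)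

/-- The value at (the residue class of) `a` of the juggling pattern `𝒥_f` associated to a
bounded `(n,2n)`-affine permutation `f`:
`(𝒥_f)_a = {a - f(b) + 2n : b < a, f(b) ≥ a}`.  (For bounded `f`, every such `b` lies in
the interval `[a - 2n, a)`.) -/
noncomputable def JPofPerm (n : ℕ) (f : ℤ → ℤ) (a : ℤ) : Finset ℕ :=
  ((Finset.Ico (a - 2*n) a).filter (fun b => a ≤ f b)).image
    (fun b => (a - f b + 2*n).toNat)

theorem stmt_15 (n : ℕ) (hn : 0 < n) (f : ℤ → ℤ)
    (hf : IsAffinePerm n (2*n) f) (hb : IsBoundedAP (2*n) f) :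
    ∀ a : ℤ, Rset n (JPofPerm n f (-a)) = JPofPerm n (Rperm n f) a := by
  obtain ⟨⟨finj, fsurj⟩, hper, hsum⟩ := hf
  intro a
  ext x
  simp only [Rset, JPofPerm, Finset.mem_sdiff, Finset.mem_Icc, Finset.mem_image,
    Finset.mem_filter, Finset.mem_Ico, not_exists]
  simp only [Rperm]
  constructor
  · rintro ⟨⟨hx1, hx2⟩, hno⟩
    obtain ⟨c, hc⟩ := fsurj ((x : ℤ) - a - 1)
    have hcb := hb c
    have hclo : -a ≤ c := by
      by_contra hlt
      push_neg at hlt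
      exact hno ((-a - f c + 2*n).toNat)
        ⟨⟨c, ⟨⟨by omega, by omega⟩, by omega⟩, rfl⟩, by omega⟩
    refine ⟨-c - 1, ⟨⟨by omega, by omega⟩, ?_⟩, ?_⟩
    · have hc' : (-(-c - 1) - 1) = c := by ring
      rw [hc']; omega
    · have hc' : (-(-c - 1) - 1) = c := by ring
      rw [hc']; omega
  · rintro ⟨b, ⟨⟨hb1, hb2⟩, hb3⟩, hbv⟩
    have hcb := hb (-b - 1)
    refine ⟨⟨by omega, by omega⟩, ?_⟩
    rintro j ⟨⟨b', ⟨⟨h1, h2⟩, h3⟩, h4⟩, h5⟩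
    have hb'b := hb b'
    have heq : f b' = f (-b - 1) := by omega
    have := finj heq
    omega
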